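/- Let F ⊣ U be an adjunction with U : D ⥤ C strong monoidal, between monoidal categories with left duals, and let T = F ⋙ U be the induced bimonad on C. Define S_x : T(ᵛ(T x)) → ᵛx as the composite UF(ᵛ(UF x)) → UF(U(ᵛ(F x))) → U(ᵛ(F x)) → ᵛ(UF x) → ᵛx built from the comparison isomorphism φ : ᵛ ∘ Uᵒᵖ ≅ U ∘ ᵛ, the counit ε of the adjunction, and ᵛ applied to the unit η. Then S is a left antipode for the bimonad T, i.e. S satisfies axioms (HM1) and (HM2); hence T is a Hopf monad. -/

import Mathlib

open CategoryTheory MonoidalCategory Opposite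

/-- A left duality on a monoidal category: a contravariant functor `ᵛ` together with
dinatural evaluation and coevaluation families satisfying the snake identities. -/
structure LeftDuality (C : Type*) [Category C] [MonoidalCategory C] where
  V : Cᵒᵖ ⥤ C
  ev : ∀ a : C, V.obj (op a) ⊗ a ⟶ 𝟙_ C
  coev : ∀ a : C, 𝟙_ C ⟶ a ⊗ V.obj (op a)
  ev_dinatural : ∀ {a b : C} (f : a ⟶ b),
    (V.map f.op ⊗ₘ 𝟙 a) ≫ ev a = (𝟙 (V.obj (op b)) ⊗ₘ f) ≫ ev b
  coev_dinatural : ∀ {a b : C} (f : a ⟶ b),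
    coev a ≫ (f ⊗ₘ 𝟙 (V.obj (op a))) = coev b ≫ (𝟙 b ⊗ₘ V.map f.op)
  snake₁ : ∀ a : C,
    (λ_ a).inv ≫ (coev a ⊗ₘ 𝟙 a) ≫ (α_ a (V.obj (op a)) a).hom ≫
      (𝟙 a ⊗ₘ ev a) ≫ (ρ_ a).hom = 𝟙 a
  snake₂ : ∀ a : C,
    (ρ_ (V.obj (op a))).inv ≫ (𝟙 (V.obj (op a)) ⊗ₘ coev a) ≫
      (α_ (V.obj (op a)) a (V.obj (op a))).inv ≫ (ev a ⊗ₘ 𝟙 (V.obj (op a))) ≫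
        (λ_ (V.obj (op a))).hom = 𝟙 (V.obj (op a))

variable {C D : Type*} [Category C] [Category D] [MonoidalCategory C] [MonoidalCategory D]

/-- The oplax tensorator on a left adjoint `F` of a lax monoidal functor `U`. -/
noncomputable def mateTensorator (F : C ⥤ D) (U : D ⥤ C) (adj : F ⊣ U) [U.LaxMonoidal]
    (x y : C) : F.obj (x ⊗ y) ⟶ F.obj x ⊗ F.obj y :=
  F.map (adj.unit.app x ⊗ₘ adj.unit.app y) ≫
    F.map (Functor.LaxMonoidal.μ U (F.obj x) (F.obj y)) ≫
      adj.counit.app (F.obj x ⊗ F.obj y)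

/-- The oplax counit on a left adjoint `F` of a lax monoidal functor `U`. -/
noncomputable def mateCounit (F : C ⥤ D) (U : D ⥤ C) (adj : F ⊣ U) [U.LaxMonoidal] :
    F.obj (𝟙_ C) ⟶ 𝟙_ D :=
  F.map (Functor.LaxMonoidal.ε U) ≫ adj.counit.app (𝟙_ D)

/-- The oplax tensorator of the bimonad `T = F ⋙ U` for `U` strong monoidal. -/
noncomputable def monadTensorator (F : C ⥤ D) (U : D ⥤ C) (adj : F ⊣ U) [U.Monoidal]
    (x y : C) : U.obj (F.obj (x ⊗ y)) ⟶ U.obj (F.obj x) ⊗ U.obj (F.obj y) :=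
  U.map (mateTensorator F U adj x y) ≫ Functor.OplaxMonoidal.δ U (F.obj x) (F.obj y)

/-- The oplax counit of the bimonad `T = F ⋙ U` for `U` strong monoidal. -/
noncomputable def monadCounit (F : C ⥤ D) (U : D ⥤ C) (adj : F ⊣ U) [U.Monoidal] :
    U.obj (F.obj (𝟙_ C)) ⟶ 𝟙_ C :=
  U.map (mateCounit F U adj) ≫ Functor.OplaxMonoidal.η U

/-- The evaluation exhibiting `U(ᵛd)` as a left dual of `U(d)`. -/
noncomputable def evU (U : D ⥤ C) [U.Monoidal] (DD : LeftDuality D) (d : D) :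
    U.obj (DD.V.obj (op d)) ⊗ U.obj d ⟶ 𝟙_ C :=
  Functor.LaxMonoidal.μ U (DD.V.obj (op d)) d ≫ U.map (DD.ev d) ≫ Functor.OplaxMonoidal.η U

/-- The canonical comparison map `ᵛU(d) ⟶ U(ᵛd)` for a strong monoidal `U`. -/
noncomputable def dualComparison (U : D ⥤ C) [U.Monoidal]
    (DC : LeftDuality C) (DD : LeftDuality D) (d : D) :
    DC.V.obj (op (U.obj d)) ⟶ U.obj (DD.V.obj (op d)) :=
  (ρ_ (DC.V.obj (op (U.obj d)))).inv ≫
    (𝟙 (DC.V.obj (op (U.obj d))) ⊗ₘ Functor.LaxMonoidal.ε U) ≫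
      (𝟙 (DC.V.obj (op (U.obj d))) ⊗ₘ U.map (DD.coev d)) ≫
        (𝟙 (DC.V.obj (op (U.obj d))) ⊗ₘ Functor.OplaxMonoidal.δ U d (DD.V.obj (op d))) ≫
          (α_ (DC.V.obj (op (U.obj d))) (U.obj d) (U.obj (DD.V.obj (op d)))).inv ≫
            (DC.ev (U.obj d) ⊗ₘ 𝟙 (U.obj (DD.V.obj (op d)))) ≫
              (λ_ (U.obj (DD.V.obj (op d)))).hom

/-- The inverse comparison map `U(ᵛd) ⟶ ᵛU(d)`. -/
noncomputable def dualComparisonInv (U : D ⥤ C) [U.Monoidal]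
    (DC : LeftDuality C) (DD : LeftDuality D) (d : D) :
    U.obj (DD.V.obj (op d)) ⟶ DC.V.obj (op (U.obj d)) :=
  (ρ_ (U.obj (DD.V.obj (op d)))).inv ≫
    (𝟙 (U.obj (DD.V.obj (op d))) ⊗ₘ DC.coev (U.obj d)) ≫
      (α_ (U.obj (DD.V.obj (op d))) (U.obj d) (DC.V.obj (op (U.obj d)))).inv ≫
        (evU U DD d ⊗ₘ 𝟙 (DC.V.obj (op (U.obj d)))) ≫
          (λ_ (DC.V.obj (op (U.obj d)))).hom

/-- The candidate left antipode for the bimonad `T = F ⋙ U`: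
`S_x : T(ᵛ(T x)) ⟶ ᵛx` is the composite
`UF(ᵛ(UF x)) → UF(U(ᵛ(F x))) → U(ᵛ(F x)) → ᵛ(UF x) → ᵛx`
built from the comparison isomorphism, the counit `ε`, and `ᵛ` of the unit `η`. -/
noncomputable def adjunctionAntipode (F : C ⥤ D) (U : D ⥤ C) (adj : F ⊣ U) [U.Monoidal]
    (DC : LeftDuality C) (DD : LeftDuality D) (x : C) :
    U.obj (F.obj (DC.V.obj (op (U.obj (F.obj x))))) ⟶ DC.V.obj (op x) :=
  U.map (F.map (dualComparison U DC DD (F.obj x))) ≫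
    U.map (adj.counit.app (DD.V.obj (op (F.obj x)))) ≫
      dualComparisonInv U DC DD (F.obj x) ≫ DC.V.map (adj.unit.app x).op

/-! ### Auxiliary lemmas for the proof -/

open Functor.LaxMonoidal Functor.OplaxMonoidal

section GenericTranspose
variable {E : Type*} [Category E] [MonoidalCategory E]

/-- generic transpose lemma for evaluations -/
private theorem transpose_ev {X a A : E} (cv : 𝟙_ E ⟶ a ⊗ A) (ev : A ⊗ a ⟶ 𝟙_ E)
    (e' : X ⊗ a ⟶ 𝟙_ E)
    (hs : (λ_ a).inv ≫ (cv ⊗ₘ 𝟙 a) ≫ (α_ a A a).hom ≫ (𝟙 a ⊗ₘ ev) ≫ (ρ_ a).hom = 𝟙 a) :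
    (((ρ_ X).inv ≫ (𝟙 X ⊗ₘ cv) ≫ (α_ X a A).inv ≫ (e' ⊗ₘ 𝟙 A) ≫ (λ_ A).hom) ⊗ₘ 𝟙 a) ≫ ev = e' := by
  calc _ = ((ρ_ X).inv ▷ a ≫ (X ◁ cv) ▷ a ≫ (α_ X a A).inv ▷ a ≫ (α_ (X ⊗ a) A a).hom) ≫
        (e' ▷ (A ⊗ a)) ≫ (𝟙_ E ◁ ev) ≫ (λ_ (𝟙_ E)).hom := by monoidal
    _ = ((ρ_ X).inv ▷ a ≫ (X ◁ cv) ▷ a ≫ (α_ X a A).inv ▷ a ≫ (α_ (X ⊗ a) A a).hom) ≫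
        ((X ⊗ a) ◁ ev) ≫ (e' ▷ 𝟙_ E) ≫ (λ_ (𝟙_ E)).hom := by rw [whisker_exchange_assoc]
    _ = (𝟙 X ⊗ₘ ((λ_ a).inv ≫ (cv ⊗ₘ 𝟙 a) ≫ (α_ a A a).hom ≫ (𝟙 a ⊗ₘ ev) ≫ (ρ_ a).hom)) ≫ e' := by
        monoidal
    _ = e' := by rw [hs]; simp

/-- generic transpose lemma for coevaluations -/
private theorem transpose_coev {X a A : E} (cv : 𝟙_ E ⟶ a ⊗ A) (cv' : 𝟙_ E ⟶ a ⊗ X)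
    (e' : X ⊗ a ⟶ 𝟙_ E)
    (hs : (λ_ a).inv ≫ (cv' ⊗ₘ 𝟙 a) ≫ (α_ a X a).hom ≫ (𝟙 a ⊗ₘ e') ≫ (ρ_ a).hom = 𝟙 a) :
    cv' ≫ (𝟙 a ⊗ₘ ((ρ_ X).inv ≫ (𝟙 X ⊗ₘ cv) ≫ (α_ X a A).inv ≫ (e' ⊗ₘ 𝟙 A) ≫ (λ_ A).hom)) =
      cv := by
  calc _ = (λ_ (𝟙_ E)).inv ≫ (cv' ▷ 𝟙_ E) ≫ ((a ⊗ X) ◁ cv) ≫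
        ((α_ a X (a ⊗ A)).hom ≫ (a ◁ (α_ X a A).inv)) ≫ (a ◁ (e' ▷ A)) ≫
          (a ◁ (λ_ A).hom) := by monoidal
    _ = (λ_ (𝟙_ E)).inv ≫ (𝟙_ E ◁ cv) ≫ (cv' ▷ (a ⊗ A)) ≫
        ((α_ a X (a ⊗ A)).hom ≫ (a ◁ (α_ X a A).inv)) ≫ (a ◁ (e' ▷ A)) ≫
          (a ◁ (λ_ A).hom) := by rw [← whisker_exchange_assoc]
    _ = cv ≫ (((λ_ a).inv ≫ (cv' ⊗ₘ 𝟙 a) ≫ (α_ a X a).hom ≫ (𝟙 a ⊗ₘ e') ≫ (ρ_ a).hom) ⊗ₘ 𝟙 A) := by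
        monoidal
    _ = cv := by rw [hs]; simp

private theorem nat_psi {X₁ X₂ a₁ a₂ A₁ A₂ : E} (u : X₂ ⟶ X₁) (w : a₁ ⟶ a₂) (vw : A₂ ⟶ A₁)
    (cv₁ : 𝟙_ E ⟶ a₁ ⊗ A₁) (cv₂ : 𝟙_ E ⟶ a₂ ⊗ A₂)
    (e₁ : X₁ ⊗ a₁ ⟶ 𝟙_ E) (e₂ : X₂ ⊗ a₂ ⟶ 𝟙_ E)
    (h : (u ⊗ₘ 𝟙 a₁) ≫ e₁ = (𝟙 X₂ ⊗ₘ w) ≫ e₂)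
    (cd : cv₁ ≫ (w ⊗ₘ 𝟙 A₁) = cv₂ ≫ (𝟙 a₂ ⊗ₘ vw)) :
    u ≫ ((ρ_ X₁).inv ≫ (𝟙 X₁ ⊗ₘ cv₁) ≫ (α_ X₁ a₁ A₁).inv ≫ (e₁ ⊗ₘ 𝟙 A₁) ≫ (λ_ A₁).hom) =
    ((ρ_ X₂).inv ≫ (𝟙 X₂ ⊗ₘ cv₂) ≫ (α_ X₂ a₂ A₂).inv ≫ (e₂ ⊗ₘ 𝟙 A₂) ≫ (λ_ A₂).hom) ≫ vw := by
  have h' : (u ▷ a₁) ≫ e₁ = (X₂ ◁ w) ≫ e₂ := by simpa using h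
  have cd' : cv₁ ≫ (w ▷ A₁) = cv₂ ≫ (a₂ ◁ vw) := by simpa using cd
  calc _ = (ρ_ X₂).inv ≫ (u ▷ 𝟙_ E) ≫ (X₁ ◁ cv₁) ≫ (α_ X₁ a₁ A₁).inv ≫ (e₁ ▷ A₁) ≫
        (λ_ A₁).hom := by monoidal
    _ = (ρ_ X₂).inv ≫ (X₂ ◁ cv₁) ≫ (u ▷ (a₁ ⊗ A₁)) ≫ (α_ X₁ a₁ A₁).inv ≫ (e₁ ▷ A₁) ≫
        (λ_ A₁).hom := by rw [← whisker_exchange_assoc]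
    _ = (ρ_ X₂).inv ≫ (X₂ ◁ cv₁) ≫ (α_ X₂ a₁ A₁).inv ≫ (((u ▷ a₁) ≫ e₁) ▷ A₁) ≫
        (λ_ A₁).hom := by simp only [comp_whiskerRight]; monoidal
    _ = (ρ_ X₂).inv ≫ (X₂ ◁ (cv₁ ≫ (w ▷ A₁))) ≫ (α_ X₂ a₂ A₁).inv ≫ (e₂ ▷ A₁) ≫
        (λ_ A₁).hom := by
          rw [h']; simp only [comp_whiskerRight, MonoidalCategory.whiskerLeft_comp]; monoidal
    _ = (ρ_ X₂).inv ≫ (X₂ ◁ cv₂) ≫ (α_ X₂ a₂ A₂).inv ≫ ((X₂ ⊗ a₂) ◁ vw) ≫ (e₂ ▷ A₁) ≫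
        (λ_ A₁).hom := by
          rw [cd']; simp only [MonoidalCategory.whiskerLeft_comp]; monoidal
    _ = (ρ_ X₂).inv ≫ (X₂ ◁ cv₂) ≫ (α_ X₂ a₂ A₂).inv ≫ (e₂ ▷ A₂) ≫ (𝟙_ E ◁ vw) ≫
        (λ_ A₁).hom := by rw [whisker_exchange_assoc]
    _ = _ := by monoidal

private theorem nat_chi {X₁ X₂ a₁ a₂ A₁ A₂ : E} (u : X₂ ⟶ X₁) (w : a₁ ⟶ a₂) (vw : A₂ ⟶ A₁)
    (c₁ : 𝟙_ E ⟶ a₁ ⊗ X₁) (c₂ : 𝟙_ E ⟶ a₂ ⊗ X₂)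
    (ev₁ : A₁ ⊗ a₁ ⟶ 𝟙_ E) (ev₂ : A₂ ⊗ a₂ ⟶ 𝟙_ E)
    (hc : c₁ ≫ (w ⊗ₘ 𝟙 X₁) = c₂ ≫ (𝟙 a₂ ⊗ₘ u))
    (ed : (vw ⊗ₘ 𝟙 a₁) ≫ ev₁ = (𝟙 A₂ ⊗ₘ w) ≫ ev₂) :
    vw ≫ ((ρ_ A₁).inv ≫ (𝟙 A₁ ⊗ₘ c₁) ≫ (α_ A₁ a₁ X₁).inv ≫ (ev₁ ⊗ₘ 𝟙 X₁) ≫ (λ_ X₁).hom) =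
    ((ρ_ A₂).inv ≫ (𝟙 A₂ ⊗ₘ c₂) ≫ (α_ A₂ a₂ X₂).inv ≫ (ev₂ ⊗ₘ 𝟙 X₂) ≫ (λ_ X₂).hom) ≫ u := by
  have ed' : (vw ▷ a₁) ≫ ev₁ = (A₂ ◁ w) ≫ ev₂ := by simpa using ed
  have hc' : c₁ ≫ (w ▷ X₁) = c₂ ≫ (a₂ ◁ u) := by simpa using hc
  calc _ = (ρ_ A₂).inv ≫ (vw ▷ 𝟙_ E) ≫ (A₁ ◁ c₁) ≫ (α_ A₁ a₁ X₁).inv ≫ (ev₁ ▷ X₁) ≫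
        (λ_ X₁).hom := by monoidal
    _ = (ρ_ A₂).inv ≫ (A₂ ◁ c₁) ≫ (vw ▷ (a₁ ⊗ X₁)) ≫ (α_ A₁ a₁ X₁).inv ≫ (ev₁ ▷ X₁) ≫
        (λ_ X₁).hom := by rw [← whisker_exchange_assoc]
    _ = (ρ_ A₂).inv ≫ (A₂ ◁ c₁) ≫ (α_ A₂ a₁ X₁).inv ≫ (((vw ▷ a₁) ≫ ev₁) ▷ X₁) ≫
        (λ_ X₁).hom := by simp only [comp_whiskerRight]; monoidal
    _ = (ρ_ A₂).inv ≫ (A₂ ◁ (c₁ ≫ (w ▷ X₁))) ≫ (α_ A₂ a₂ X₁).inv ≫ (ev₂ ▷ X₁) ≫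
        (λ_ X₁).hom := by
          rw [ed']; simp only [comp_whiskerRight, MonoidalCategory.whiskerLeft_comp]; monoidal
    _ = (ρ_ A₂).inv ≫ (A₂ ◁ c₂) ≫ (α_ A₂ a₂ X₂).inv ≫ ((A₂ ⊗ a₂) ◁ u) ≫ (ev₂ ▷ X₁) ≫
        (λ_ X₁).hom := by
          rw [hc']; simp only [MonoidalCategory.whiskerLeft_comp]; monoidal
    _ = (ρ_ A₂).inv ≫ (A₂ ◁ c₂) ≫ (α_ A₂ a₂ X₂).inv ≫ (ev₂ ▷ X₂) ≫ (𝟙_ E ◁ u) ≫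
        (λ_ X₁).hom := by rw [whisker_exchange_assoc]
    _ = _ := by monoidal

end GenericTranspose

section ULevel
variable (U : D ⥤ C) [U.Monoidal] (DC : LeftDuality C) (DD : LeftDuality D)

private theorem evU_dinat {d₁ d₂ : D} (g : d₁ ⟶ d₂) :
    (U.map (DD.V.map g.op) ⊗ₘ 𝟙 (U.obj d₁)) ≫ evU U DD d₁ =
    (𝟙 (U.obj (DD.V.obj (op d₂))) ⊗ₘ U.map g) ≫ evU U DD d₂ := by
  have h' : (DD.V.map g.op ▷ d₁) ≫ DD.ev d₁ = (DD.V.obj (op d₂) ◁ g) ≫ DD.ev d₂ := by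
    simpa using DD.ev_dinatural g
  simp only [evU, tensorHom_id, id_tensorHom, Functor.LaxMonoidal.μ_natural_left_assoc,
    Functor.LaxMonoidal.μ_natural_right_assoc]
  rw [← U.map_comp_assoc, ← U.map_comp_assoc, h']

/-- the candidate coevaluation for `U.obj d`. -/
private noncomputable def coevU (d : D) : 𝟙_ C ⟶ U.obj d ⊗ U.obj (DD.V.obj (op d)) :=
  ε U ≫ U.map (DD.coev d) ≫ δ U d (DD.V.obj (op d))

private theorem coevU_dinat {d₁ d₂ : D} (g : d₁ ⟶ d₂) :
    coevU U DD d₁ ≫ (U.map g ⊗ₘ 𝟙 (U.obj (DD.V.obj (op d₁)))) =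
    coevU U DD d₂ ≫ (𝟙 (U.obj d₂) ⊗ₘ U.map (DD.V.map g.op)) := by
  have h' : DD.coev d₁ ≫ (g ▷ DD.V.obj (op d₁)) = DD.coev d₂ ≫ (d₂ ◁ DD.V.map g.op) := by
    simpa using DD.coev_dinatural g
  simp only [coevU, tensorHom_id, id_tensorHom, Category.assoc,
    Functor.OplaxMonoidal.δ_natural_left, Functor.OplaxMonoidal.δ_natural_right]
  rw [← U.map_comp_assoc, ← U.map_comp_assoc, h']

private theorem snakeU₁ (d : D) :
    (λ_ (U.obj d)).inv ≫ (coevU U DD d ⊗ₘ 𝟙 (U.obj d)) ≫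
      (α_ (U.obj d) (U.obj (DD.V.obj (op d))) (U.obj d)).hom ≫
        (𝟙 (U.obj d) ⊗ₘ evU U DD d) ≫ (ρ_ (U.obj d)).hom = 𝟙 (U.obj d) := by
  have h' : (λ_ d).inv ≫ DD.coev d ▷ d ≫ (α_ d (DD.V.obj (op d)) d).hom ≫
      (d ◁ DD.ev d) ≫ (ρ_ d).hom = 𝟙 d := by simpa using DD.snake₁ d
  simp only [coevU, evU, tensorHom_id, id_tensorHom, comp_whiskerRight, Category.assoc,
    MonoidalCategory.whiskerLeft_comp]
  have assoc1 : δ U d (DD.V.obj (op d)) ▷ U.obj d ≫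
      (α_ (U.obj d) (U.obj (DD.V.obj (op d))) (U.obj d)).hom ≫
        (U.obj d ◁ μ U (DD.V.obj (op d)) d) =
      μ U (d ⊗ DD.V.obj (op d)) d ≫ U.map (α_ d (DD.V.obj (op d)) d).hom ≫
        δ U d (DD.V.obj (op d) ⊗ d) := by
    rw [← cancel_epi (μ U d (DD.V.obj (op d)) ▷ U.obj d),
      ← cancel_mono (μ U d (DD.V.obj (op d) ⊗ d))]
    simp [Functor.LaxMonoidal.associativity]
  slice_lhs 4 6 => rw [assoc1]
  simp only [Category.assoc]
  rw [Functor.LaxMonoidal.μ_natural_left_assoc, Functor.OplaxMonoidal.δ_natural_right_assoc,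
    Functor.OplaxMonoidal.right_unitality_hom, Functor.LaxMonoidal.left_unitality_inv_assoc]
  simp only [← U.map_comp]
  rw [show (λ_ d).inv ≫ DD.coev d ▷ d ≫ (α_ d (DD.V.obj (op d)) d).hom ≫ d ◁ DD.ev d ≫
    (ρ_ d).hom = 𝟙 d from h', U.map_id]

private theorem dualComparison_eq (d : D) : dualComparison U DC DD d =
    (ρ_ (DC.V.obj (op (U.obj d)))).inv ≫ (𝟙 (DC.V.obj (op (U.obj d))) ⊗ₘ coevU U DD d) ≫
      (α_ (DC.V.obj (op (U.obj d))) (U.obj d) (U.obj (DD.V.obj (op d)))).inv ≫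
        (DC.ev (U.obj d) ⊗ₘ 𝟙 (U.obj (DD.V.obj (op d)))) ≫
          (λ_ (U.obj (DD.V.obj (op d)))).hom := by
  simp [dualComparison, coevU, id_tensorHom, MonoidalCategory.whiskerLeft_comp, ε, δ]

private theorem lemA (d : D) :
    (dualComparisonInv U DC DD d ⊗ₘ 𝟙 (U.obj d)) ≫ DC.ev (U.obj d) = evU U DD d := by
  rw [dualComparisonInv]
  exact transpose_ev _ _ _ (DC.snake₁ (U.obj d))

private theorem lemB (d : D) :
    (dualComparison U DC DD d ⊗ₘ 𝟙 (U.obj d)) ≫ evU U DD d = DC.ev (U.obj d) := by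
  rw [dualComparison_eq]
  exact transpose_ev _ _ _ (snakeU₁ U DD d)

private theorem lemC (d : D) :
    coevU U DD d ≫ (𝟙 (U.obj d) ⊗ₘ dualComparisonInv U DC DD d) = DC.coev (U.obj d) := by
  rw [dualComparisonInv]
  exact transpose_coev _ _ _ (snakeU₁ U DD d)

private theorem lemD (d : D) :
    DC.coev (U.obj d) ≫ (𝟙 (U.obj d) ⊗ₘ dualComparison U DC DD d) = coevU U DD d := by
  rw [dualComparison_eq]
  exact transpose_coev _ _ _ (DC.snake₁ (U.obj d))

private theorem natPhi {d₁ d₂ : D} (g : d₁ ⟶ d₂) :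
    DC.V.map (U.map g).op ≫ dualComparison U DC DD d₁ =
    dualComparison U DC DD d₂ ≫ U.map (DD.V.map g.op) := by
  rw [dualComparison_eq, dualComparison_eq]
  exact nat_chi (U.map (DD.V.map g.op)) (U.map g) (DC.V.map (U.map g).op) _ _ _ _
    (coevU_dinat U DD g) (DC.ev_dinatural (U.map g))

private theorem natPhiInv {d₁ d₂ : D} (g : d₁ ⟶ d₂) :
    U.map (DD.V.map g.op) ≫ dualComparisonInv U DC DD d₁ =
    dualComparisonInv U DC DD d₂ ≫ DC.V.map (U.map g).op := by
  rw [dualComparisonInv, dualComparisonInv]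
  exact nat_psi (U.map (DD.V.map g.op)) (U.map g) (DC.V.map (U.map g).op) _ _ _ _
    (evU_dinat U DD g) (DC.coev_dinatural (U.map g))

end ULevel

section AdjLevel
variable (F : C ⥤ D) (U : D ⥤ C) (adj : F ⊣ U) [U.Monoidal]
  (DC : LeftDuality C) (DD : LeftDuality D)

set_option linter.unusedSectionVars false

private theorem homEquiv_counit_comp {z : D} {w : D} (h : z ⟶ w) :
    adj.homEquiv _ _ (adj.counit.app z ≫ h) = U.map h := by
  rw [Adjunction.homEquiv_unit, U.map_comp, ← Category.assoc,
    adj.right_triangle_components, Category.id_comp]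

private theorem homEquiv_counit_app (z : D) :
    adj.homEquiv (U.obj z) z (adj.counit.app z) = 𝟙 (U.obj z) := by
  rw [Adjunction.homEquiv_unit, adj.right_triangle_components]

private theorem unit_nat {z z' : C} (f : z ⟶ z') :
    adj.unit.app z ≫ U.map (F.map f) = f ≫ adj.unit.app z' := by
  simpa using (adj.unit.naturality f).symm

/-- On free modules, the precomposition of the antipode with `T(ᵛ(action))` simplifies. -/
private theorem antipode_free (x : C) :
    U.map (F.map (DC.V.map (U.map (adj.counit.app (F.obj x))).op)) ≫
      adjunctionAntipode F U adj DC DD (U.obj (F.obj x)) =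
    U.map (F.map (dualComparison U DC DD (F.obj x))) ≫
      U.map (adj.counit.app (DD.V.obj (op (F.obj x)))) ≫
        dualComparisonInv U DC DD (F.obj x) := by
  rw [adjunctionAntipode, ← U.map_comp_assoc, ← F.map_comp,
    natPhi U DC DD (d₁ := F.obj (U.obj (F.obj x))) (d₂ := F.obj x)
      (adj.counit.app (F.obj x)),
    F.map_comp, U.map_comp, Category.assoc]
  congr 1
  rw [← U.map_comp_assoc,
    show F.map (U.map (DD.V.map (adj.counit.app (F.obj x)).op)) ≫
        adj.counit.app (DD.V.obj (op (F.obj (U.obj (F.obj x))))) =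
      adj.counit.app (DD.V.obj (op (F.obj x))) ≫ DD.V.map (adj.counit.app (F.obj x)).op from
        by simpa using adj.counit.naturality (DD.V.map (adj.counit.app (F.obj x)).op),
    U.map_comp, Category.assoc,
    ← Category.assoc (U.map (DD.V.map (adj.counit.app (F.obj x)).op)),
    natPhiInv U DC DD (d₁ := F.obj (U.obj (F.obj x))) (d₂ := F.obj x)
      (adj.counit.app (F.obj x)),
    Category.assoc, ← DC.V.map_comp, ← op_comp, adj.right_triangle_components]
  simp

private theorem hm1D (x : C) :
    F.map (DC.ev (U.obj (F.obj x))) ≫ mateCounit F U adj =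
    mateTensorator F U adj (DC.V.obj (op (U.obj (F.obj x)))) (U.obj (F.obj x)) ≫
      ((F.map (dualComparison U DC DD (F.obj x)) ≫
          adj.counit.app (DD.V.obj (op (F.obj x)))) ⊗ₘ adj.counit.app (F.obj x)) ≫
        DD.ev (F.obj x) := by
  apply (adj.homEquiv _ _).injective
  rw [mateCounit, mateTensorator]
  simp only [Category.assoc]
  rw [← F.map_comp_assoc, ← F.map_comp_assoc, Adjunction.homEquiv_naturality_left,
    Adjunction.homEquiv_naturality_left, homEquiv_counit_app, homEquiv_counit_comp,
    Category.comp_id, U.map_comp]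
  simp only [Category.assoc]
  rw [← Functor.LaxMonoidal.μ_natural_assoc, tensorHom_comp_tensorHom_assoc]
  rw [show adj.unit.app (DC.V.obj (op (U.obj (F.obj x)))) ≫
      U.map (F.map (dualComparison U DC DD (F.obj x)) ≫
        adj.counit.app (DD.V.obj (op (F.obj x)))) = dualComparison U DC DD (F.obj x) from by
    rw [U.map_comp, ← Category.assoc, unit_nat, Category.assoc,
      adj.right_triangle_components, Category.comp_id]]
  rw [adj.right_triangle_components, ← lemB U DC DD (F.obj x)]
  simp [evU]

private theorem hm2D (x : C) :
    F.map (DC.coev (U.obj (F.obj x))) ≫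
      mateTensorator F U adj (U.obj (F.obj x)) (DC.V.obj (op (U.obj (F.obj x)))) ≫
        (adj.counit.app (F.obj x) ⊗ₘ
          (F.map (dualComparison U DC DD (F.obj x)) ≫
            adj.counit.app (DD.V.obj (op (F.obj x))))) =
    mateCounit F U adj ≫ DD.coev (F.obj x) := by
  apply (adj.homEquiv _ _).injective
  rw [mateCounit, mateTensorator]
  simp only [Category.assoc]
  rw [← F.map_comp_assoc, ← F.map_comp_assoc, Adjunction.homEquiv_naturality_left,
    homEquiv_counit_comp, Adjunction.homEquiv_naturality_left, homEquiv_counit_comp]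
  simp only [Category.assoc]
  rw [← Functor.LaxMonoidal.μ_natural, tensorHom_comp_tensorHom_assoc]
  rw [show adj.unit.app (DC.V.obj (op (U.obj (F.obj x)))) ≫
      U.map (F.map (dualComparison U DC DD (F.obj x)) ≫
        adj.counit.app (DD.V.obj (op (F.obj x)))) = dualComparison U DC DD (F.obj x) from by
    rw [U.map_comp, ← Category.assoc, unit_nat, Category.assoc,
      adj.right_triangle_components, Category.comp_id]]
  rw [adj.right_triangle_components]
  slice_lhs 1 2 => rw [lemD U DC DD (F.obj x)]
  simp [coevU]
end AdjLevel

/-- Bruguières–Virelizier: for an adjunction `F ⊣ U` with `U` strong monoidal between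
monoidal categories with left duals, the natural transformation `S` defined above is a
left antipode for the bimonad `T = F ⋙ U`: it satisfies the axioms (HM1) and (HM2),
so `T` is a Hopf monad. -/
theorem adjunction_antipode_is_left_antipode (F : C ⥤ D) (U : D ⥤ C) (adj : F ⊣ U)
    [U.Monoidal] (DC : LeftDuality C) (DD : LeftDuality D) :
    (∀ x : C,
      U.map (F.map (DC.ev (U.obj (F.obj x)))) ≫ monadCounit F U adj =
        monadTensorator F U adj (DC.V.obj (op (U.obj (F.obj x)))) (U.obj (F.obj x)) ≫
          ((U.map (F.map (DC.V.map (U.map (adj.counit.app (F.obj x))).op)) ≫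
              adjunctionAntipode F U adj DC DD (U.obj (F.obj x))) ⊗ₘ
            U.map (adj.counit.app (F.obj x))) ≫
            DC.ev (U.obj (F.obj x))) ∧
    (∀ x : C,
      U.map (F.map (DC.coev (U.obj (F.obj x)))) ≫
          monadTensorator F U adj (U.obj (F.obj x)) (DC.V.obj (op (U.obj (F.obj x)))) ≫
            (U.map (adj.counit.app (F.obj x)) ⊗ₘ
              (U.map (F.map (DC.V.map (U.map (adj.counit.app (F.obj x))).op)) ≫
                adjunctionAntipode F U adj DC DD (U.obj (F.obj x)))) =
        monadCounit F U adj ≫ DC.coev (U.obj (F.obj x))) := by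
  constructor
  · intro x
    rw [← Category.assoc, antipode_free F U adj DC DD x]
    rw [show ((U.map (F.map (dualComparison U DC DD (F.obj x))) ≫
        U.map (adj.counit.app (DD.V.obj (op (F.obj x)))) ≫
          dualComparisonInv U DC DD (F.obj x)) ⊗ₘ U.map (adj.counit.app (F.obj x))) =
      ((U.map (F.map (dualComparison U DC DD (F.obj x)) ≫
          adj.counit.app (DD.V.obj (op (F.obj x)))) ⊗ₘ U.map (adj.counit.app (F.obj x))) ≫
        (dualComparisonInv U DC DD (F.obj x) ⊗ₘ 𝟙 (U.obj (F.obj x)))) from by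
      rw [tensorHom_comp_tensorHom]; simp]
    simp only [Category.assoc]
    rw [lemA U DC DD (F.obj x), evU]
    simp only [Functor.id_obj]
    rw [Functor.LaxMonoidal.μ_natural_assoc,
      monadTensorator, monadCounit]
    simp only [Category.assoc, Functor.Monoidal.δ_μ_assoc]
    simpa using congrArg (fun t => U.map t ≫ Functor.OplaxMonoidal.η U)
      (hm1D F U adj DC DD x)
  · intro x
    rw [antipode_free F U adj DC DD x]
    rw [show (U.map (adj.counit.app (F.obj x)) ⊗ₘ
        (U.map (F.map (dualComparison U DC DD (F.obj x))) ≫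
          U.map (adj.counit.app (DD.V.obj (op (F.obj x)))) ≫
            dualComparisonInv U DC DD (F.obj x))) =
      ((U.map (adj.counit.app (F.obj x)) ⊗ₘ
          U.map (F.map (dualComparison U DC DD (F.obj x)) ≫
            adj.counit.app (DD.V.obj (op (F.obj x))))) ≫
        (𝟙 (U.obj (F.obj x)) ⊗ₘ dualComparisonInv U DC DD (F.obj x))) from by
      rw [tensorHom_comp_tensorHom]; simp]
    have LC2 : Functor.OplaxMonoidal.η U ≫ DC.coev (U.obj (F.obj x)) =
        U.map (DD.coev (F.obj x)) ≫ δ U (F.obj x) (DD.V.obj (op (F.obj x))) ≫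
          (𝟙 (U.obj (F.obj x)) ⊗ₘ dualComparisonInv U DC DD (F.obj x)) := by
      rw [← lemC U DC DD (F.obj x)]; simp [coevU]
    rw [monadTensorator, monadCounit]
    simp only [Category.assoc]
    rw [Functor.OplaxMonoidal.δ_natural_assoc, LC2]
    simpa using congrArg (fun t => U.map t ≫ δ U (F.obj x) (DD.V.obj (op (F.obj x))) ≫
      (𝟙 (U.obj (F.obj x)) ⊗ₘ dualComparisonInv U DC DD (F.obj x)))
      (hm2D F U adj DC DD x)
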